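/- (Folding Lemma with b = 1) Let a_1, …, a_n be positive integers with n ≥ 2 and a_n ≥ 2, and let t/q = [a_1, …, a_n] = 1/(a_1 + 1/(a_2 + ⋯ + 1/a_n)) be the value of this continued fraction written in lowest terms. Then t/q + (−1)^n/q^2 equals the value of the continued fraction [a_1, …, a_{n−1}, a_n + 1, a_n − 1, a_{n−1}, …, a_1]. -/

import Mathlib

/-- The value of the finite simple continued fraction `1/(a₁ + 1/(a₂ + ⋯ + 1/aₙ))`. -/
def cfVal : List ℕ → ℚ
  | [] => 0
  | a :: l => 1 / (a + cfVal l)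

mutual
def pA : List ℕ → ℤ
  | [] => 1
  | _ :: l => qA l
def pB : List ℕ → ℤ
  | [] => 0
  | _ :: l => qB l
def qA : List ℕ → ℤ
  | [] => 0
  | a :: l => pA l + a * qA l
def qB : List ℕ → ℤ
  | [] => 1
  | a :: l => pB l + a * qB l
end

lemma cfVal_nonneg (L : List ℕ) : 0 ≤ cfVal L := by
  induction L with
  | nil => simp [cfVal]
  | cons a l ih =>
    simp only [cfVal]
    positivity

lemma Q4_nonneg (M : List ℕ) (hM : ∀ x ∈ M, 0 < x) :
    0 ≤ pA M ∧ 0 ≤ pB M ∧ 0 ≤ qA M ∧ 1 ≤ qB M := by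
  induction M with
  | nil => simp [pA, pB, qA, qB]
  | cons a l ih =>
    obtain ⟨h1, h2, h3, h4⟩ := ih (fun x hx => hM x (List.mem_cons_of_mem _ hx))
    have ha : 1 ≤ (a : ℤ) := by exact_mod_cast hM a List.mem_cons_self
    refine ⟨by simpa [pA] using h3, by simpa [pB] using by linarith, ?_, ?_⟩
    · simp only [qA]; nlinarith
    · simp only [qB]; nlinarith

lemma cfVal_append (M : List ℕ) (hM : ∀ x ∈ M, 0 < x) (T : List ℕ) :
    cfVal (M ++ T) =
      (pA M * cfVal T + pB M) / (qA M * cfVal T + qB M) := by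
  induction M with
  | nil => simp [pA, pB, qA, qB]
  | cons a l ih =>
    obtain ⟨h1, h2, h3, h4⟩ := Q4_nonneg l (fun x hx => hM x (List.mem_cons_of_mem _ hx))
    have hT := cfVal_nonneg T
    have h1' : (0:ℚ) ≤ (pA l : ℚ) := by exact_mod_cast h1
    have h2' : (0:ℚ) ≤ (pB l : ℚ) := by exact_mod_cast h2
    have h3' : (0:ℚ) ≤ (qA l : ℚ) := by exact_mod_cast h3
    have h4' : (1:ℚ) ≤ (qB l : ℚ) := by exact_mod_cast h4
    have hden : (0:ℚ) < qA l * cfVal T + qB l := by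
      have : (0:ℚ) ≤ (qA l : ℚ) * cfVal T := by positivity
      linarith
    have hnum : (0:ℚ) ≤ pA l * cfVal T + pB l := by positivity
    have hrec := ih (fun x hx => hM x (List.mem_cons_of_mem _ hx))
    have hden2 : (0:ℚ) < (a : ℚ) * (qA l * cfVal T + qB l) + (pA l * cfVal T + pB l) := by
      have : (0:ℚ) ≤ (a:ℚ) * (qA l * cfVal T + qB l) := by positivity
      have hq : (0:ℚ) < (a:ℚ) := by exact_mod_cast hM a List.mem_cons_self
      nlinarith
    have key : (a : ℚ) + (pA l * cfVal T + pB l) / (qA l * cfVal T + qB l) =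
        ((a:ℚ) * (qA l * cfVal T + qB l) + (pA l * cfVal T + pB l)) /
          (qA l * cfVal T + qB l) := by
      field_simp
    have hden3 : (0:ℚ) < (qA (a :: l) : ℚ) * cfVal T + qB (a :: l) := by
      simp only [qA, qB]
      push_cast
      nlinarith
    rw [List.cons_append]
    rw [show cfVal (a :: (l ++ T)) = 1 / ((a:ℚ) + cfVal (l ++ T)) from rfl]
    rw [hrec, key, one_div_div]
    rw [div_eq_div_iff hden2.ne' hden3.ne']
    simp only [pA, pB, qA, qB]
    push_cast
    ring

lemma Q4_det (M : List ℕ) : pA M * qB M - pB M * qA M = (-1) ^ M.length := by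
  induction M with
  | nil => simp [pA, pB, qA, qB]
  | cons a l ih =>
    simp only [pA, pB, qA, qB, List.length_cons, pow_succ]
    ring_nf
    ring_nf at ih
    linarith

lemma Q4_concat (L : List ℕ) (a : ℕ) :
    pA (L ++ [a]) = pB L ∧ pB (L ++ [a]) = pA L + a * pB L ∧
    qA (L ++ [a]) = qB L ∧ qB (L ++ [a]) = qA L + a * qB L := by
  induction L with
  | nil => simp [pA, pB, qA, qB]
  | cons b l ih =>
    obtain ⟨h1, h2, h3, h4⟩ := ih
    rw [List.cons_append]
    refine ⟨?_, ?_, ?_, ?_⟩ <;>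
      simp only [pA, pB, qA, qB, h1, h2, h3, h4] <;> ring

lemma Q4_reverse (M : List ℕ) :
    pA M.reverse = pA M ∧ pB M.reverse = qA M ∧ qA M.reverse = pB M ∧ qB M.reverse = qB M := by
  induction M with
  | nil => simp [pA, pB, qA, qB]
  | cons a l ih =>
    obtain ⟨h1, h2, h3, h4⟩ := ih
    obtain ⟨g1, g2, g3, g4⟩ := Q4_concat l.reverse a
    rw [List.reverse_cons]
    refine ⟨?_, ?_, ?_, ?_⟩ <;>
      simp only [g1, g2, g3, g4, h1, h2, h3, h4, pA, pB, qA, qB] <;> ring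

/-- **Folding Lemma with `b = 1`.** If `t/q = [a₁, …, aₙ]` in lowest terms (here
the list is `M ++ [a]` with `a = aₙ ≥ 2`, `n = M.length + 1 ≥ 2`, and `q` is the
denominator of `cfVal (M ++ [a])`), then
`t/q + (-1)^n/q² = [a₁, …, aₙ₋₁, aₙ + 1, aₙ - 1, aₙ₋₁, …, a₁]`. -/
theorem folding_lemma_b_eq_one (M : List ℕ) (a : ℕ) (hM : ∀ x ∈ M, 0 < x)
    (hMne : M ≠ []) (ha : 2 ≤ a) :
    cfVal (M ++ [a]) + (-1) ^ (M.length + 1) / ((cfVal (M ++ [a])).den : ℚ) ^ 2 =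
      cfVal (M ++ [a + 1, a - 1] ++ M.reverse) := by
  obtain ⟨h1, h2, h3, h4⟩ := Q4_nonneg M hM
  have h1' : (0:ℚ) ≤ (pA M : ℚ) := by exact_mod_cast h1
  have h2' : (0:ℚ) ≤ (pB M : ℚ) := by exact_mod_cast h2
  have h3' : (0:ℚ) ≤ (qA M : ℚ) := by exact_mod_cast h3
  have h4' : (1:ℚ) ≤ (qB M : ℚ) := by exact_mod_cast h4
  have haR : (2:ℚ) ≤ (a:ℚ) := by exact_mod_cast ha
  have hapos : (0:ℚ) < (a:ℚ) := by linarith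
  have hdet : (pA M : ℚ) * (qB M : ℚ) - (pB M : ℚ) * (qA M : ℚ) = (-1) ^ M.length := by
    exact_mod_cast congrArg (Int.cast : ℤ → ℚ) (Q4_det M)
  have hQQpos : (0:ℚ) < (qA M : ℚ) + a * (qB M : ℚ) := by nlinarith
  -- value of the left continued fraction
  have hva : cfVal [a] = 1 / (a:ℚ) := by simp [cfVal]
  have hL : cfVal (M ++ [a]) = ((pA M : ℚ) + a * pB M) / ((qA M : ℚ) + a * qB M) := by
    rw [cfVal_append M hM [a], hva]
    have hd1 : (0:ℚ) < (qA M : ℚ) * (1/(a:ℚ)) + (qB M : ℚ) := by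
      have : (0:ℚ) ≤ (qA M : ℚ) * (1/(a:ℚ)) := by positivity
      linarith
    rw [div_eq_div_iff hd1.ne' hQQpos.ne']
    field_simp
  -- denominator of the left continued fraction
  have hdenval : ((cfVal (M ++ [a])).den : ℚ) = (qA M : ℚ) + a * qB M := by
    have hcop : Nat.Coprime (pA M + a * pB M).natAbs (qA M + a * qB M).natAbs := by
      rw [Nat.Coprime, ← Int.gcd, ← Int.isCoprime_iff_gcd_eq_one]
      have hd := Q4_det M
      have hsq : ((-1:ℤ) ^ M.length) * ((-1:ℤ) ^ M.length) = 1 := by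
        rw [← pow_add]
        exact (neg_one_pow_eq_one_iff_even (by norm_num)).2 (Even.add_self _)
      refine ⟨(-1:ℤ)^M.length * qB M, -((-1:ℤ)^M.length * pB M), ?_⟩
      linear_combination ((-1:ℤ)^M.length) * hd + hsq
    have hpos : (0:ℤ) < qA M + a * qB M := by exact_mod_cast hQQpos
    have hd := Rat.den_div_eq_of_coprime hpos hcop
    have heq : cfVal (M ++ [a]) =
        ((pA M + a * pB M : ℤ) : ℚ) / ((qA M + a * qB M : ℤ) : ℚ) := by
      rw [hL]; push_cast; ring_nf
    rw [heq]
    exact_mod_cast congrArg (Int.cast : ℤ → ℚ) hd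
  -- value of the reversed list
  have hMrevpos : ∀ x ∈ M.reverse, 0 < x := fun x hx => hM x (List.mem_reverse.1 hx)
  obtain ⟨r1, r2, r3, r4⟩ := Q4_reverse M
  have hQpos : (0:ℚ) < (qB M : ℚ) := by linarith
  have hrev : cfVal M.reverse = (qA M : ℚ) / (qB M : ℚ) := by
    have h := cfVal_append M.reverse hMrevpos []
    simp only [List.append_nil, cfVal] at h
    rw [h, r2, r4]
    simp
  -- value of the folded tail
  have hD1pos : (0:ℚ) < ((a:ℚ) - 1) * (qB M : ℚ) + (qA M : ℚ) := by nlinarith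
  have hD2pos : (0:ℚ) <
      ((a:ℚ) + 1) * (((a:ℚ) - 1) * (qB M : ℚ) + (qA M : ℚ)) + (qB M : ℚ) := by nlinarith
  have hw : cfVal ([a+1, a-1] ++ M.reverse) =
      (((a:ℚ) - 1) * (qB M : ℚ) + (qA M : ℚ)) /
        (((a:ℚ) + 1) * (((a:ℚ) - 1) * (qB M : ℚ) + (qA M : ℚ)) + (qB M : ℚ)) := by
    have hcast : ((a - 1 : ℕ) : ℚ) = (a:ℚ) - 1 := by
      have h1a : 1 ≤ a := by omega
      push_cast [h1a]; ring
    have hsub1 : ((a:ℚ) - 1) + cfVal M.reverse =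
        (((a:ℚ) - 1) * (qB M : ℚ) + (qA M : ℚ)) / (qB M : ℚ) := by
      rw [hrev]; field_simp
    simp only [List.cons_append, List.nil_append, List.append_eq, cfVal, hcast, hsub1]
    rw [one_div_div]
    have h2 : ((a + 1 : ℕ) : ℚ) + (qB M : ℚ) / (((a:ℚ) - 1) * (qB M : ℚ) + (qA M : ℚ)) =
        (((a:ℚ) + 1) * (((a:ℚ) - 1) * (qB M : ℚ) + (qA M : ℚ)) + (qB M : ℚ)) /
          (((a:ℚ) - 1) * (qB M : ℚ) + (qA M : ℚ)) := by
      push_cast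
      rw [add_div, mul_div_cancel_right₀ _ hD1pos.ne']
    rw [h2, one_div_div]
  have hR := cfVal_append M hM ([a+1, a-1] ++ M.reverse)
  rw [List.append_assoc, hR, hw, hdenval, hL]
  -- final pure algebra
  generalize (pA M : ℚ) = P' at *
  generalize (pB M : ℚ) = P at *
  generalize (qA M : ℚ) = Q' at *
  generalize (qB M : ℚ) = Q at *
  generalize hε : ((-1 : ℚ)) ^ M.length = ε at *
  have hε2 : ε * ε = 1 := by
    rw [← hε, ← pow_add]
    exact (neg_one_pow_eq_one_iff_even (by norm_num)).2 (Even.add_self _)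
  set D1 : ℚ := ((a:ℚ) - 1) * Q + Q' with hD1
  set D2 : ℚ := ((a:ℚ) + 1) * D1 + Q with hD2
  have hD2ne : D2 ≠ 0 := hD2pos.ne'
  have hQQne : Q' + (a:ℚ) * Q ≠ 0 := hQQpos.ne'
  have hkey1 : Q' * (D1/D2) + Q = ((Q' + a * Q))^2 / D2 := by
    have e1 : Q' * (D1/D2) + Q = (Q' * D1 + Q * D2)/D2 := by field_simp
    have e2 : Q' * D1 + Q * D2 = (Q' + a * Q)^2 := by rw [hD1, hD2]; ring
    rw [e1, e2]
  have hkey2 : P' * (D1/D2) + P = ((P' + a * P) * (Q' + a * Q) - ε) / D2 := by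
    have e1 : P' * (D1/D2) + P = (P' * D1 + P * D2)/D2 := by field_simp
    have e2 : P' * D1 + P * D2 = (P' + a * P) * (Q' + a * Q) - ε := by
      rw [hD1, hD2]
      linear_combination (-1 : ℚ) * hdet
    rw [e1, e2]
  rw [hkey1, hkey2, pow_succ, hε]
  rw [div_div_div_cancel_right₀ hD2ne]
  field_simp
  ring
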